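/- Let T_N be N×N real matrices and define T_{2N} by the JAM scaling: T_{2N} = P_{2N} ⬝ blkdiag(T_N, T_N) ⬝ [[I_N, Ī_N],[Ī_N, -I_N]]. If T_N ⬝ T_Nᵀ is diagonal, then T_{2N} ⬝ T_{2N}ᵀ is diagonal; in particular if T_N is orthogonal then (1/√2) T_{2N} is orthogonal. -/

import Mathlib

open Real Matrix

noncomputable def dctII (N : Nat) : Matrix (Fin N) (Fin N) Real :=
  Matrix.of fun k n => Real.sqrt (2 / N) *
    (if (k : Nat) = 0 then 1 / Real.sqrt 2 else 1) *
    Real.cos ((k : Nat) * (2 * (n : Nat) + 1) * Real.pi / (2 * N))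

noncomputable def dctIV (N : Nat) : Matrix (Fin N) (Fin N) Real :=
  Matrix.of fun k n => Real.sqrt (2 / N) *
    Real.cos ((2 * (k : Nat) + 1) * (2 * (n : Nat) + 1) * Real.pi / (4 * N))

noncomputable def dstIV (N : Nat) : Matrix (Fin N) (Fin N) Real :=
  Matrix.of fun k n => Real.sqrt (2 / N) *
    Real.sin ((2 * (k : Nat) + 1) * (2 * (n : Nat) + 1) * Real.pi / (4 * N))

def exI (N : Nat) : Matrix (Fin N) (Fin N) Real :=
  Matrix.of fun k n => if (k : Nat) + (n : Nat) = N - 1 then 1 else 0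

def Jmat (N : Nat) : Matrix (Fin N) (Fin N) Real :=
  Matrix.diagonal fun n => (-1 : Real) ^ (n : Nat)

def pShuffle (N : Nat) : Matrix (Fin (2 * N)) (Fin (2 * N)) Real :=
  Matrix.of fun k n =>
    if (k : Nat) = (if (n : Nat) < N then 2 * (n : Nat) else (2 * (n : Nat)) % (2 * N) + 1)
    then 1 else 0

noncomputable def reix (N : Nat)
    (M : Matrix (Fin N ⊕ Fin N) (Fin N ⊕ Fin N) Real) :
    Matrix (Fin (2 * N)) (Fin (2 * N)) Real :=
  Matrix.reindex (finSumFinEquiv.trans (finCongr (two_mul N).symm))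
    (finSumFinEquiv.trans (finCongr (two_mul N).symm)) M

noncomputable def blk (N : Nat) (A B : Matrix (Fin N) (Fin N) Real) :
    Matrix (Fin (2 * N)) (Fin (2 * N)) Real :=
  reix N (Matrix.fromBlocks A 0 0 B)

noncomputable def butterfly (N : Nat) : Matrix (Fin (2 * N)) (Fin (2 * N)) Real :=
  reix N (Matrix.fromBlocks 1 (exI N) (exI N) (-1))

noncomputable def trilU (N : Nat) : Matrix (Fin N) (Fin N) Real :=
  Matrix.of fun k n =>
    if (n : Nat) = 0 then Real.sqrt 2 / 2
    else if (n : Nat) ≤ (k : Nat) then 1 else 0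

noncomputable def Amat (N : Nat) : Matrix (Fin N) (Fin N) Real :=
  Jmat N * trilU N * Jmat N

noncomputable def Dmat (N : Nat) : Matrix (Fin N) (Fin N) Real :=
  Matrix.diagonal fun n => 2 * Real.cos ((2 * (n : Nat) + 1) * Real.pi / (4 * N))

noncomputable def Gmat (N : Nat) : Matrix (Fin N) (Fin N) Real :=
  Matrix.diagonal fun n =>
    2 * (-1 : Real) ^ (n : Nat) * Real.cos ((2 * (n : Nat) + 1) * Real.pi / (4 * N))

noncomputable def Bmat (N : Nat) : Matrix (Fin N) (Fin N) Real :=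
  -(exI N * trilU N * Jmat N)

def bitrev (m j : Nat) : Nat :=
  (List.range m).foldl (fun acc i => 2 * acc + (if j.testBit i then 1 else 0)) 0

def Rmat (m : Nat) : Matrix (Fin (2 ^ m)) (Fin (2 ^ m)) Real :=
  Matrix.of fun i j => if (i : Nat) = bitrev m (j : Nat) then 1 else 0


section AuxJam

lemma mod2N {N n : Nat} (h1 : N ≤ n) (h2 : n < 2 * N) :
    (2 * n) % (2 * N) = 2 * n - 2 * N := by
  rw [Nat.mod_eq_sub_mod (by omega), Nat.mod_eq_of_lt (by omega)]

def shf (N : Nat) (n : Fin (2 * N)) : Fin (2 * N) :=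
  ⟨if (n : Nat) < N then 2 * (n : Nat) else (2 * (n : Nat)) % (2 * N) + 1, by
    rcases n with ⟨n, hn⟩
    dsimp only
    split_ifs with h
    · omega
    · rw [mod2N (by omega) hn]; omega⟩

lemma shf_injective (N : Nat) : Function.Injective (shf N) := by
  rintro ⟨a, ha⟩ ⟨b, hb⟩ hab
  have hv : (if a < N then 2 * a else (2 * a) % (2 * N) + 1)
      = (if b < N then 2 * b else (2 * b) % (2 * N) + 1) := congrArg Fin.val hab
  ext
  dsimp only
  split_ifs at hv with h1 h2 h2
  · omega
  · rw [mod2N (by omega) hb] at hv; omega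
  · rw [mod2N (by omega) ha] at hv; omega
  · rw [mod2N (by omega) ha, mod2N (by omega) hb] at hv; omega

noncomputable def shfPerm (N : Nat) : Equiv.Perm (Fin (2 * N)) :=
  Equiv.ofBijective (shf N) ((Finite.injective_iff_bijective).1 (shf_injective N))

lemma pShuffle_eq (N : Nat) :
    pShuffle N = ((shfPerm N).symm.toPEquiv.toMatrix : Matrix _ _ Real) := by
  ext k n
  rw [PEquiv.toMatrix_apply]
  simp only [pShuffle, Matrix.of_apply, Equiv.toPEquiv_apply, Option.mem_def,
    Option.some.injEq]
  refine if_congr ?_ rfl rfl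
  have h1 : (k : Nat) = (if (n : Nat) < N then 2 * (n : Nat) else (2 * (n : Nat)) % (2 * N) + 1)
      ↔ k = shf N n := (Fin.ext_iff (a := k) (b := shf N n)).symm
  rw [h1]
  have h2 : k = shf N n ↔ k = shfPerm N n := Iff.rfl
  rw [h2, ← Equiv.symm_apply_eq, eq_comm]

lemma conj_pShuffle (N : Nat) (A : Matrix (Fin (2 * N)) (Fin (2 * N)) Real) :
    pShuffle N * A * (pShuffle N)ᵀ = A.submatrix (shfPerm N).symm (shfPerm N).symm := by
  rw [pShuffle_eq, ← PEquiv.toMatrix_symm, ← Equiv.toPEquiv_symm,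
    PEquiv.toMatrix_toPEquiv_mul, PEquiv.mul_toMatrix_toPEquiv]
  ext i j; simp

lemma exI_mul_exI (N : Nat) : exI N * exI N = 1 := by
  ext i j
  rw [Matrix.mul_apply, Matrix.one_apply]
  rcases i with ⟨i, hi⟩
  rw [Finset.sum_eq_single (⟨N - 1 - i, by omega⟩ : Fin N)]
  · simp only [exI, Matrix.of_apply]
    rcases j with ⟨j, hj⟩
    simp only [Fin.mk.injEq, Fin.ext_iff]
    split_ifs <;> simp_all <;> omega
  · rintro ⟨b, hb⟩ - hbne
    have hb' : b ≠ N - 1 - i := fun h => hbne (Fin.ext h)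
    simp only [exI, Matrix.of_apply]
    rw [if_neg (by omega)]
    ring
  · intro h; exact absurd (Finset.mem_univ _) h

lemma exI_transpose (N : Nat) : (exI N)ᵀ = exI N := by
  ext i j
  simp [exI, Matrix.transpose_apply, Nat.add_comm]

lemma reix_mul (N : Nat) (A B : Matrix (Fin N ⊕ Fin N) (Fin N ⊕ Fin N) Real) :
    reix N A * reix N B = reix N (A * B) := by
  simp only [reix, Matrix.reindex_apply]
  exact Matrix.submatrix_mul_equiv A B _ _ _

lemma reix_transpose (N : Nat) (A : Matrix (Fin N ⊕ Fin N) (Fin N ⊕ Fin N) Real) :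
    (reix N A)ᵀ = reix N Aᵀ := by
  simp [reix, Matrix.transpose_submatrix]

lemma reix_one (N : Nat) : reix N 1 = 1 := by
  simp only [reix, Matrix.reindex_apply]; exact Matrix.submatrix_one_equiv _

lemma reix_isDiag (N : Nat) {A : Matrix (Fin N ⊕ Fin N) (Fin N ⊕ Fin N) Real}
    (hA : A.IsDiag) : (reix N A).IsDiag := by
  intro i j hij
  simp only [reix, Matrix.reindex_apply, Matrix.submatrix_apply]
  exact hA (fun h => hij (by simpa using congrArg (finSumFinEquiv.trans (finCongr (two_mul N).symm)) h))

lemma reix_smul (N : Nat) (c : Real) (A : Matrix (Fin N ⊕ Fin N) (Fin N ⊕ Fin N) Real) :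
    reix N (c • A) = c • reix N A := by
  ext i j; simp [reix]

lemma butterfly_mul_self (N : Nat) : butterfly N * (butterfly N)ᵀ = (2 : Real) • 1 := by
  have hbt : (butterfly N)ᵀ = butterfly N := by
    rw [butterfly, reix_transpose, Matrix.fromBlocks_transpose, exI_transpose,
      Matrix.transpose_one, Matrix.transpose_neg, Matrix.transpose_one]
  rw [hbt, butterfly, reix_mul, Matrix.fromBlocks_multiply, exI_mul_exI]
  have h1 : Matrix.fromBlocks (1 * 1 + (1 : Matrix (Fin N) (Fin N) Real))
      (1 * exI N + exI N * (-1)) (exI N * 1 + (-1) * exI N)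
      ((1 : Matrix (Fin N) (Fin N) Real) + (-1) * (-1))
      = (2 : Real) • (1 : Matrix (Fin N ⊕ Fin N) (Fin N ⊕ Fin N) Real) := by
    have e0 : (1 : Matrix (Fin N) (Fin N) Real) * exI N + exI N * (-1) = 0 := by
      rw [Matrix.one_mul, Matrix.mul_neg, Matrix.mul_one, add_neg_cancel]
    have e0' : exI N * 1 + (-1) * exI N = 0 := by
      rw [Matrix.mul_one, Matrix.neg_mul, Matrix.one_mul, add_neg_cancel]
    have e1 : (1 : Matrix (Fin N) (Fin N) Real) * 1 + 1
        = (2 : Real) • (1 : Matrix (Fin N) (Fin N) Real) := by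
      rw [Matrix.one_mul, two_smul]
    have e2 : (1 : Matrix (Fin N) (Fin N) Real) + (-1) * (-1)
        = (2 : Real) • (1 : Matrix (Fin N) (Fin N) Real) := by
      rw [neg_mul_neg, Matrix.one_mul, two_smul]
    rw [e0, e0', e1, e2,
      show (0 : Matrix (Fin N) (Fin N) Real) = (2 : Real) • 0 from (smul_zero _).symm,
      ← Matrix.fromBlocks_smul, Matrix.fromBlocks_one]
  rw [h1, reix_smul, reix_one]

lemma isDiag_submatrix_equiv {n m : Type*} {A : Matrix m m Real} (e : n → m)
    (he : Function.Injective e) (h : A.IsDiag) : (A.submatrix e e).IsDiag :=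
  fun _ _ hij => h fun hh => hij (he hh)

lemma jam_key (N : Nat) (T : Matrix (Fin N) (Fin N) Real) :
    (pShuffle N * blk N T T * butterfly N) * (pShuffle N * blk N T T * butterfly N)ᵀ
      = (2 : Real) • ((reix N (Matrix.fromBlocks (T * Tᵀ) 0 0 (T * Tᵀ))).submatrix
          (shfPerm N).symm (shfPerm N).symm) := by
  have hblk : blk N T T * (blk N T T)ᵀ = reix N (Matrix.fromBlocks (T * Tᵀ) 0 0 (T * Tᵀ)) := by
    rw [blk, reix_transpose, Matrix.fromBlocks_transpose]
    simp only [Matrix.transpose_zero]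
    rw [reix_mul, Matrix.fromBlocks_multiply]
    simp
  have hassoc : (pShuffle N * blk N T T * butterfly N) *
      (pShuffle N * blk N T T * butterfly N)ᵀ
      = pShuffle N * (blk N T T * (butterfly N * (butterfly N)ᵀ) * (blk N T T)ᵀ) *
        (pShuffle N)ᵀ := by
    rw [Matrix.transpose_mul, Matrix.transpose_mul]
    noncomm_ring
  rw [hassoc, butterfly_mul_self, mul_smul_comm, mul_one, smul_mul_assoc, hblk,
    mul_smul_comm, smul_mul_assoc, conj_pShuffle]

end AuxJam

theorem jam_scaling_orthogonality {N : Nat}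
    (T : Matrix (Fin N) (Fin N) Real) :
    ((T * Tᵀ).IsDiag →
      ((pShuffle N * blk N T T * butterfly N) *
        (pShuffle N * blk N T T * butterfly N)ᵀ).IsDiag) ∧
    (T * Tᵀ = 1 →
      ((1 / Real.sqrt 2) • (pShuffle N * blk N T T * butterfly N)) *
        ((1 / Real.sqrt 2) • (pShuffle N * blk N T T * butterfly N))ᵀ = 1) := by
  constructor
  · intro h
    rw [jam_key]
    exact ((isDiag_submatrix_equiv _ (Equiv.injective _)
      (reix_isDiag N (h.fromBlocks h))).smul 2)
  · intro h
    rw [Matrix.transpose_smul, smul_mul_assoc, mul_smul_comm, jam_key, h,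
      Matrix.fromBlocks_one, reix_one, Matrix.submatrix_one_equiv, smul_smul, smul_smul]
    have h2 : Real.sqrt 2 * Real.sqrt 2 = 2 := Real.mul_self_sqrt (by norm_num)
    have h2' : Real.sqrt 2 ≠ 0 := by positivity
    have hc : 1 / Real.sqrt 2 * (1 / Real.sqrt 2) * 2 = 1 := by
      field_simp
      rw [sq, h2]
    rw [hc, one_smul]
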